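/- Let e be a fixed unit vector of ℝ^{n+1} and let Sⁿ₊ := {x ∈ Sⁿ : ⟨x,e⟩ > 0} be the corresponding open hemisphere of the unit sphere Sⁿ ⊂ ℝ^{n+1}. Let A₁,…,A_{n+2} ∈ Sⁿ₊ be in general position and α₁,…,α_{n+2} nonzero reals with Σᵢ αᵢAᵢ = 0. Suppose B₁,…,B_{n+2} : [0,1] → Sⁿ₊ are continuous maps with Bᵢ(0) = Aᵢ that satisfy, for all t ∈ [0,1], the tensegrity constraints of F_{n,1}: ‖Bᵢ(t) − B_j(t)‖ ≥ ‖Aᵢ − A_j‖ whenever αᵢα_j < 0, and ‖Bᵢ(t) − B_j(t)‖ ≤ ‖Aᵢ − A_j‖ whenever αᵢα_j > 0. Then ‖Bᵢ(t) − B_j(t)‖ = ‖Aᵢ − A_j‖ for all i, j and all t ∈ [0,1]; i.e. F_{n,1} is rigid in the open hemisphere Sⁿ₊. -/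

import Mathlib

open Finset RealInnerProductSpace

/-- Points on the unit sphere of `ℝ^{d}` are in spherical general position if every `d` of
them are linearly independent. -/
def SphGeneralPosition {d m : ℕ} (A : Fin m → EuclideanSpace ℝ (Fin d)) : Prop :=
  ∀ s : Finset (Fin m), s.card = d → LinearIndependent ℝ (fun i : ↥s => A i.1)


variable {n : ℕ}

set_option maxHeartbeats 1000000 in
private lemma li_succAbove (A : Fin (n + 2) → EuclideanSpace ℝ (Fin (n + 1)))
    (hgp : SphGeneralPosition A) (j : Fin (n + 2)) :
    LinearIndependent ℝ (fun c : Fin (n + 1) => A (j.succAbove c)) := by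
  classical
  have hcard : ({j}ᶜ : Finset (Fin (n + 2))).card = n + 1 := by
    rw [Finset.card_compl]; simp
  have hli := hgp {j}ᶜ hcard
  have hmem : ∀ c : Fin (n + 1), j.succAbove c ∈ ({j}ᶜ : Finset (Fin (n + 2))) := by
    intro c
    simp [Finset.mem_compl, Fin.succAbove_ne j c]
  have hf : Function.Injective
      (fun c : Fin (n + 1) => (⟨j.succAbove c, hmem c⟩ : ↥({j}ᶜ : Finset (Fin (n + 2))))) := by
    intro a b hab
    have h2 : j.succAbove a = j.succAbove b := congrArg Subtype.val hab
    exact Fin.succAbove_right_injective h2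
  exact hli.comp _ hf

private lemma dep_unique (A : Fin (n + 2) → EuclideanSpace ℝ (Fin (n + 1)))
    (hgp : SphGeneralPosition A) (α : Fin (n + 2) → ℝ) (hα : ∀ i, α i ≠ 0)
    (hsum : ∑ i, α i • A i = 0) (c : Fin (n + 2) → ℝ)
    (hc : ∑ i, c i • A i = 0) : c = (c 0 / α 0) • α := by
  classical
  set d : Fin (n + 2) → ℝ := fun i => α 0 * c i - c 0 * α i with hd
  have hdsum : ∑ i, d i • A i = 0 := by
    have : ∑ i, d i • A i = α 0 • (∑ i, c i • A i) - c 0 • (∑ i, α i • A i) := by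
      rw [Finset.smul_sum, Finset.smul_sum, ← Finset.sum_sub_distrib]
      refine Finset.sum_congr rfl fun i _ => ?_
      rw [hd]; simp [sub_smul, mul_smul]
    rw [this, hc, hsum, smul_zero, smul_zero, sub_zero]
  have hd0 : d 0 = 0 := by rw [hd]; ring
  have hdrest : ∀ i, d i = 0 := by
    have hsplit := Fin.sum_univ_succAbove (fun i => d i • A i) 0
    rw [hdsum, hd0, zero_smul, zero_add] at hsplit
    have hli := li_succAbove A hgp 0
    have hz := Fintype.linearIndependent_iff.mp hli
      (fun cc => d ((0 : Fin (n + 2)).succAbove cc)) hsplit.symm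
    intro i
    rcases eq_or_ne i 0 with h | h
    · rw [h]; exact hd0
    · obtain ⟨cc, hcc⟩ := Fin.exists_succAbove_eq h
      rw [← hcc]; exact hz cc
  funext i
  have hdi := hdrest i
  rw [hd] at hdi
  simp only at hdi
  have hα0 : α 0 ≠ 0 := hα 0
  simp only [Pi.smul_apply, smul_eq_mul]
  field_simp
  linarith

private lemma gamma_key (P : Fin (n + 2) → EuclideanSpace ℝ (Fin (n + 1))) (k : Fin (n + 1)) :
    ∑ j : Fin (n + 2), ((-1 : ℝ) ^ (j : ℕ) *
        Matrix.det (Matrix.of fun r c : Fin (n + 1) => P (j.succAbove c) r)) * P j k = 0 := by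
  classical
  set N : Matrix (Fin (n + 2)) (Fin (n + 2)) ℝ :=
    Matrix.of (Fin.cons (fun j => P j k) (fun r j => P j r)) with hN
  have hdet0 : N.det = 0 := by
    apply Matrix.det_zero_of_row_eq (i := 0) (j := k.succ) (Fin.succ_ne_zero k).symm
    ext j
    simp [hN, Matrix.of_apply, Fin.cons_zero, Fin.cons_succ]
  have hexp := Matrix.det_succ_row_zero N
  rw [hdet0] at hexp
  have hsub : ∀ j : Fin (n + 2),
      (N.submatrix Fin.succ j.succAbove) =
        Matrix.of fun r c : Fin (n + 1) => P (j.succAbove c) r := by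
    intro j; ext r c
    simp [hN, Matrix.submatrix_apply, Matrix.of_apply, Fin.cons_succ]
  calc ∑ j : Fin (n + 2), ((-1 : ℝ) ^ (j : ℕ) *
        Matrix.det (Matrix.of fun r c : Fin (n + 1) => P (j.succAbove c) r)) * P j k
      = ∑ j : Fin (n + 2), (-1 : ℝ) ^ (j : ℕ) * N 0 j * (N.submatrix Fin.succ j.succAbove).det := by
        refine Finset.sum_congr rfl fun j _ => ?_
        rw [hsub j]
        have : N 0 j = P j k := by simp [hN, Matrix.of_apply, Fin.cons_zero]
        rw [this]; ring
    _ = 0 := hexp.symm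

/-- The signed maximal minors of `n+2` vectors in `ℝ^{n+1}` give a linear dependence. -/
private lemma gamma_dep (P : Fin (n + 2) → EuclideanSpace ℝ (Fin (n + 1))) :
    ∑ j : Fin (n + 2), ((-1 : ℝ) ^ (j : ℕ) *
        Matrix.det (Matrix.of fun r c : Fin (n + 1) => P (j.succAbove c) r)) • P j = 0 := by
  set γ : Fin (n + 2) → ℝ := fun j => (-1 : ℝ) ^ (j : ℕ) *
      Matrix.det (Matrix.of fun r c : Fin (n + 1) => P (j.succAbove c) r) with hγ
  ext k
  have h := map_sum (EuclideanSpace.projₗ (𝕜 := ℝ) k) (fun j => γ j • P j) univ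
  have h2 : EuclideanSpace.projₗ (𝕜 := ℝ) k (∑ j : Fin (n+2), γ j • P j)
      = (∑ j : Fin (n+2), γ j • P j) k := rfl
  rw [h2] at h
  rw [h]
  simpa [EuclideanSpace.projₗ] using gamma_key P k

private lemma inner_sum_sum {m : ℕ} (c : Fin m → ℝ) (v : Fin m → EuclideanSpace ℝ (Fin (n + 1))) :
    ⟪∑ i, c i • v i, ∑ j, c j • v j⟫ = ∑ i, ∑ j, c i * c j * ⟪v i, v j⟫ := by
  rw [sum_inner]
  refine Finset.sum_congr rfl fun i _ => ?_
  rw [inner_sum]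
  refine Finset.sum_congr rfl fun j _ => ?_
  rw [real_inner_smul_left, real_inner_smul_right]; ring

/-- Equal Gram matrices transfer linear dependences. -/
private lemma dep_transfer {m : ℕ} (b A : Fin m → EuclideanSpace ℝ (Fin (n + 1)))
    (hG : ∀ i j, ⟪b i, b j⟫ = ⟪A i, A j⟫) (c : Fin m → ℝ)
    (hc : ∑ i, c i • b i = 0) : ∑ i, c i • A i = 0 := by
  have h : ⟪∑ i, c i • A i, ∑ j, c j • A j⟫ = 0 := by
    rw [inner_sum_sum]
    have h2 : (0 : ℝ) = ⟪∑ i, c i • b i, ∑ j, c j • b j⟫ := by rw [hc]; simp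
    rw [inner_sum_sum] at h2
    rw [h2]
    exact (Finset.sum_congr rfl fun i _ => Finset.sum_congr rfl fun j _ => by rw [hG])
  exact inner_self_eq_zero.mp h

/-- Core comparison: a dependence of `b` with the sign pattern of `α` forces the Gram matrix
of `b` to coincide with that of `A`. -/
private lemma core_eq (A b : Fin (n + 2) → EuclideanSpace ℝ (Fin (n + 1)))
    (hA : ∀ i, ‖A i‖ = 1) (hb : ∀ i, ‖b i‖ = 1)
    (α : Fin (n + 2) → ℝ)
    (g : Fin (n + 2) → ℝ) (hgdep : ∑ i, g i • b i = 0)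
    (hsign : ∀ i j, 0 < g i * g j * (α i * α j))
    (hstrut : ∀ i j, α i * α j < 0 → ‖A i - A j‖ ≤ ‖b i - b j‖)
    (hcable : ∀ i j, 0 < α i * α j → ‖b i - b j‖ ≤ ‖A i - A j‖) :
    ∀ i j, ⟪b i, b j⟫ = ⟪A i, A j⟫ := by
  classical
  set F : Fin (n + 2) × Fin (n + 2) → ℝ := fun p => g p.1 * g p.2 * ⟪A p.1, A p.2⟫ with hF
  set G : Fin (n + 2) × Fin (n + 2) → ℝ := fun p => g p.1 * g p.2 * ⟪b p.1, b p.2⟫ with hG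
  have hterm : ∀ p : Fin (n + 2) × Fin (n + 2), F p ≤ G p := by
    rintro ⟨i, j⟩
    rcases eq_or_ne i j with h | h
    · subst h
      have h1 : ⟪b i, b i⟫ = (1 : ℝ) := by
        rw [real_inner_self_eq_norm_mul_norm, hb i]; norm_num
      have h2 : ⟪A i, A i⟫ = (1 : ℝ) := by
        rw [real_inner_self_eq_norm_mul_norm, hA i]; norm_num
      simp only [hF, hG, h1, h2]; exact le_refl _
    · have hαα : α i * α j ≠ 0 := by
        intro h0
        have := hsign i j
        rw [h0, mul_zero] at this
        exact lt_irrefl 0 this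
      have hnA : ‖A i - A j‖ ^ 2 = 2 - 2 * ⟪A i, A j⟫ := by
        rw [norm_sub_sq_real, hA i, hA j]; ring
      have hnb : ‖b i - b j‖ ^ 2 = 2 - 2 * ⟪b i, b j⟫ := by
        rw [norm_sub_sq_real, hb i, hb j]; ring
      rcases hαα.lt_or_gt with hneg | hpos
      · -- strut : distance grows, inner shrinks, g i * g j < 0
        have hd := hstrut i j hneg
        have hsq : ‖A i - A j‖ ^ 2 ≤ ‖b i - b j‖ ^ 2 := by
          have := norm_nonneg (A i - A j); nlinarith
        have hinner : ⟪b i, b j⟫ ≤ ⟪A i, A j⟫ := by nlinarith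
        have hgg : g i * g j < 0 := by
          by_contra hggn
          push_neg at hggn
          have := hsign i j
          nlinarith
        simp only [hF, hG]
        nlinarith
      · -- cable
        have hd := hcable i j hpos
        have hsq : ‖b i - b j‖ ^ 2 ≤ ‖A i - A j‖ ^ 2 := by
          have := norm_nonneg (b i - b j); nlinarith
        have hinner : ⟪A i, A j⟫ ≤ ⟪b i, b j⟫ := by nlinarith
        have hgg : 0 < g i * g j := by
          by_contra hggn
          push_neg at hggn
          have := hsign i j
          nlinarith
        simp only [hF, hG]
        nlinarith
  have hGsum : ∑ p : Fin (n + 2) × Fin (n + 2), G p = 0 := by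
    rw [Fintype.sum_prod_type]
    have h2 : (0:ℝ) = ⟪∑ i, g i • b i, ∑ j, g j • b j⟫ := by rw [hgdep]; simp
    rw [inner_sum_sum] at h2
    exact h2.symm
  have hFsum : 0 ≤ ∑ p : Fin (n + 2) × Fin (n + 2), F p := by
    rw [Fintype.sum_prod_type, ← inner_sum_sum]
    exact real_inner_self_nonneg
  have hsums : ∑ p : Fin (n + 2) × Fin (n + 2), F p = ∑ p : Fin (n + 2) × Fin (n + 2), G p := by
    have hle : ∑ p : Fin (n + 2) × Fin (n + 2), F p ≤ ∑ p, G p :=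
      Finset.sum_le_sum fun p _ => hterm p
    rw [hGsum] at hle ⊢
    linarith
  have heach := (Finset.sum_eq_sum_iff_of_le (fun p _ => hterm p)).mp hsums
  intro i j
  have hp := heach (i, j) (Finset.mem_univ _)
  simp only [hF, hG] at hp
  have hgg : g i * g j ≠ 0 := by
    intro h0
    have := hsign i j
    rw [h0, zero_mul] at this
    exact lt_irrefl 0 this
  exact mul_left_cancel₀ hgg hp.symm

private lemma smul_sum_coord (m : ℕ) (γ : Fin m → ℝ) (P : Fin m → EuclideanSpace ℝ (Fin (n + 1)))
    (key : ∀ k, ∑ j : Fin m, γ j * P j k = 0) :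
    ∑ j : Fin m, γ j • P j = 0 := by
  ext k
  have h := map_sum (EuclideanSpace.projₗ (𝕜 := ℝ) k) (fun j => γ j • P j) univ
  have h2 : EuclideanSpace.projₗ (𝕜 := ℝ) k (∑ j : Fin m, γ j • P j)
      = (∑ j : Fin m, γ j • P j) k := rfl
  rw [h2] at h
  rw [h]
  simpa [EuclideanSpace.projₗ] using key k

/-- If the Gram matrix of `b` agrees with that of `A`, then the minor-determinant dependence
vector of `b` has the sign pattern of `α`. -/
private lemma sign_of_gram (A b : Fin (n + 2) → EuclideanSpace ℝ (Fin (n + 1)))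
    (hgp : SphGeneralPosition A) (α : Fin (n + 2) → ℝ) (hα : ∀ i, α i ≠ 0)
    (hsum : ∑ i, α i • A i = 0)
    (hG : ∀ i j, ⟪b i, b j⟫ = ⟪A i, A j⟫) :
    ∀ i j : Fin (n + 2), 0 < ((-1 : ℝ) ^ (i : ℕ) *
        Matrix.det (Matrix.of fun r c : Fin (n + 1) => b (i.succAbove c) r)) *
      ((-1 : ℝ) ^ (j : ℕ) *
        Matrix.det (Matrix.of fun r c : Fin (n + 1) => b (j.succAbove c) r)) *
      (α i * α j) := by
  classical
  set γ : Fin (n + 2) → ℝ := fun i => (-1 : ℝ) ^ (i : ℕ) *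
      Matrix.det (Matrix.of fun r c : Fin (n + 1) => b (i.succAbove c) r) with hγ
  have hdep : ∑ i, γ i • b i = 0 := gamma_dep b
  have hdepA : ∑ i, γ i • A i = 0 := dep_transfer b A hG γ hdep
  have hprop : γ = (γ 0 / α 0) • α := dep_unique A hgp α hα hsum γ hdepA
  set t : ℝ := γ 0 / α 0 with ht
  have htne : t ≠ 0 := by
    intro ht0
    have hγ0 : γ 0 = 0 := by
      have := congrFun hprop 0
      rw [ht0] at this
      simpa using this
    have hdet0 : Matrix.det (Matrix.of fun r c : Fin (n + 1) =>
        b ((0 : Fin (n + 2)).succAbove c) r) = 0 := by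
      have := hγ0
      rw [hγ] at this
      simpa using this
    obtain ⟨v, hvne, hvz⟩ := (Matrix.exists_mulVec_eq_zero_iff).mpr hdet0
    set c' : Fin (n + 2) → ℝ := Fin.insertNth 0 0 v with hc'
    have hc'0 : c' 0 = 0 := by rw [hc']; simp
    have hc'succ : ∀ cc : Fin (n + 1), c' ((0 : Fin (n + 2)).succAbove cc) = v cc := by
      intro cc; rw [hc']; simp
    have hc'dep : ∑ i, c' i • b i = 0 := by
      have hsplit := Fin.sum_univ_succAbove (fun i => c' i • b i) 0
      rw [hsplit, hc'0, zero_smul, zero_add]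
      have : ∀ cc : Fin (n + 1), c' ((0 : Fin (n + 2)).succAbove cc) •
          b ((0 : Fin (n + 2)).succAbove cc) = v cc • b ((0 : Fin (n + 2)).succAbove cc) := by
        intro cc; rw [hc'succ cc]
      rw [Finset.sum_congr rfl fun cc _ => this cc]
      apply smul_sum_coord
      intro k
      have := congrFun hvz k
      simp only [Matrix.mulVec, dotProduct, Matrix.of_apply, Pi.zero_apply] at this
      rw [← this]
      exact Finset.sum_congr rfl fun cc _ => by ring
    have hc'depA : ∑ i, c' i • A i = 0 := dep_transfer b A hG c' hc'dep
    have hc'prop : c' = (c' 0 / α 0) • α := dep_unique A hgp α hα hsum c' hc'depA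
    rw [hc'0] at hc'prop
    have hc'zero : c' = 0 := by
      rw [hc'prop]
      simp
    apply hvne
    funext cc
    have := congrFun hc'zero ((0 : Fin (n + 2)).succAbove cc)
    rw [hc'succ cc] at this
    exact this
  intro i j
  have hi : γ i = t * α i := by rw [hprop]; simp [ht]
  have hj : γ j = t * α j := by rw [hprop]; simp [ht]
  have hγi := hi
  have hγj := hj
  rw [hγ] at hγi hγj
  simp only at hγi hγj
  rw [hγi, hγj]
  have h1 : (t * α i) * (t * α j) * (α i * α j) = t ^ 2 * (α i * α j) ^ 2 := by ring
  rw [h1]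
  have h2 : 0 < t ^ 2 := by positivity
  have h3 : α i * α j ≠ 0 := mul_ne_zero (hα i) (hα j)
  positivity


set_option maxHeartbeats 800000 in
theorem F_n1_rigid_hemisphere {n : ℕ}
    (e : EuclideanSpace ℝ (Fin (n + 1))) (he : ‖e‖ = 1)
    (A : Fin (n + 2) → EuclideanSpace ℝ (Fin (n + 1)))
    (hA : ∀ i, ‖A i‖ = 1) (hAhemi : ∀ i, 0 < (inner ℝ (A i) e : ℝ))
    (hgp : SphGeneralPosition A)
    (α : Fin (n + 2) → ℝ) (hα : ∀ i, α i ≠ 0)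
    (hsum : ∑ i, α i • A i = 0)
    (B : Fin (n + 2) → ℝ → EuclideanSpace ℝ (Fin (n + 1)))
    (hBcont : ∀ i, ContinuousOn (B i) (Set.Icc 0 1))
    (hBsph : ∀ i, ∀ t ∈ Set.Icc (0 : ℝ) 1, ‖B i t‖ = 1)
    (hBhemi : ∀ i, ∀ t ∈ Set.Icc (0 : ℝ) 1, 0 < (inner ℝ (B i t) e : ℝ))
    (hB0 : ∀ i, B i 0 = A i)
    (hstrut : ∀ i j, α i * α j < 0 →
      ∀ t ∈ Set.Icc (0 : ℝ) 1, ‖A i - A j‖ ≤ ‖B i t - B j t‖)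
    (hcable : ∀ i j, 0 < α i * α j →
      ∀ t ∈ Set.Icc (0 : ℝ) 1, ‖B i t - B j t‖ ≤ ‖A i - A j‖) :
    ∀ i j, ∀ t ∈ Set.Icc (0 : ℝ) 1, ‖B i t - B j t‖ = ‖A i - A j‖ := by
  classical
  haveI : PreconnectedSpace (Set.Icc (0 : ℝ) 1) :=
    Subtype.preconnectedSpace isPreconnected_Icc
  have hc : ∀ i, Continuous fun x : Set.Icc (0 : ℝ) 1 => B i x :=
    fun i => continuousOn_iff_continuous_restrict.mp (hBcont i)
  have hGcont : ∀ i2 : Fin (n + 2), Continuous fun x : Set.Icc (0 : ℝ) 1 =>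
      (-1 : ℝ) ^ (i2 : ℕ) * Matrix.det
        (Matrix.of fun r c : Fin (n + 1) => B (i2.succAbove c) (x : ℝ) r) := by
    intro i2
    apply Continuous.mul continuous_const
    apply Continuous.matrix_det
    show Continuous fun x : Set.Icc (0 : ℝ) 1 =>
      Matrix.of fun r c : Fin (n + 1) => B (i2.succAbove c) (x : ℝ) r
    apply continuous_pi; intro r
    apply continuous_pi; intro c
    exact ((EuclideanSpace.proj (𝕜 := ℝ) r).continuous).comp (hc _)
  have hsetEq : {x : Set.Icc (0 : ℝ) 1 | ∀ i2 j2 : Fin (n + 2),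
        ⟪B i2 (x : ℝ), B j2 (x : ℝ)⟫ = ⟪A i2, A j2⟫}
      = {x : Set.Icc (0 : ℝ) 1 | ∀ i2 j2 : Fin (n + 2), 0 <
          ((-1 : ℝ) ^ (i2 : ℕ) * Matrix.det
            (Matrix.of fun r c : Fin (n + 1) => B (i2.succAbove c) (x : ℝ) r)) *
          ((-1 : ℝ) ^ (j2 : ℕ) * Matrix.det
            (Matrix.of fun r c : Fin (n + 1) => B (j2.succAbove c) (x : ℝ) r)) *
          (α i2 * α j2)} := by
    ext x
    simp only [Set.mem_setOf_eq]
    constructor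
    · intro hx
      exact sign_of_gram A (fun i0 => B i0 (x : ℝ)) hgp α hα hsum hx
    · intro hx
      exact core_eq A (fun i0 => B i0 (x : ℝ)) hA (fun i0 => hBsph i0 x x.2) α
        (fun i2 => (-1 : ℝ) ^ (i2 : ℕ) * Matrix.det
          (Matrix.of fun r c : Fin (n + 1) => B (i2.succAbove c) (x : ℝ) r))
        (gamma_dep (fun i0 => B i0 (x : ℝ))) hx
        (fun i2 j2 h => hstrut i2 j2 h x x.2)
        (fun i2 j2 h => hcable i2 j2 h x x.2)
  have hclosed : IsClosed {x : Set.Icc (0 : ℝ) 1 | ∀ i2 j2 : Fin (n + 2),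
      ⟪B i2 (x : ℝ), B j2 (x : ℝ)⟫ = ⟪A i2, A j2⟫} := by
    have h2 : {x : Set.Icc (0 : ℝ) 1 | ∀ i2 j2 : Fin (n + 2),
          ⟪B i2 (x : ℝ), B j2 (x : ℝ)⟫ = ⟪A i2, A j2⟫}
        = ⋂ i2, ⋂ j2, {x : Set.Icc (0 : ℝ) 1 |
            ⟪B i2 (x : ℝ), B j2 (x : ℝ)⟫ = ⟪A i2, A j2⟫} := by
      ext x; simp only [Set.mem_setOf_eq, Set.mem_iInter]
    rw [h2]
    exact isClosed_iInter fun i2 => isClosed_iInter fun j2 =>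
      isClosed_eq (Continuous.inner (hc i2) (hc j2)) continuous_const
  have hopen : IsOpen {x : Set.Icc (0 : ℝ) 1 | ∀ i2 j2 : Fin (n + 2),
      ⟪B i2 (x : ℝ), B j2 (x : ℝ)⟫ = ⟪A i2, A j2⟫} := by
    rw [hsetEq]
    have h2 : {x : Set.Icc (0 : ℝ) 1 | ∀ i2 j2 : Fin (n + 2), 0 <
          ((-1 : ℝ) ^ (i2 : ℕ) * Matrix.det
            (Matrix.of fun r c : Fin (n + 1) => B (i2.succAbove c) (x : ℝ) r)) *
          ((-1 : ℝ) ^ (j2 : ℕ) * Matrix.det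
            (Matrix.of fun r c : Fin (n + 1) => B (j2.succAbove c) (x : ℝ) r)) *
          (α i2 * α j2)}
        = ⋂ i2 : Fin (n + 2), ⋂ j2 : Fin (n + 2), {x : Set.Icc (0 : ℝ) 1 | 0 <
          ((-1 : ℝ) ^ (i2 : ℕ) * Matrix.det
            (Matrix.of fun r c : Fin (n + 1) => B (i2.succAbove c) (x : ℝ) r)) *
          ((-1 : ℝ) ^ (j2 : ℕ) * Matrix.det
            (Matrix.of fun r c : Fin (n + 1) => B (j2.succAbove c) (x : ℝ) r)) *
          (α i2 * α j2)} := by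
      ext x; simp only [Set.mem_setOf_eq, Set.mem_iInter]
    rw [h2]
    exact isOpen_iInter_of_finite fun i2 => isOpen_iInter_of_finite fun j2 =>
      isOpen_lt continuous_const (((hGcont i2).mul (hGcont j2)).mul continuous_const)
  have hne : Set.Nonempty {x : Set.Icc (0 : ℝ) 1 | ∀ i2 j2 : Fin (n + 2),
      ⟪B i2 (x : ℝ), B j2 (x : ℝ)⟫ = ⟪A i2, A j2⟫} := by
    refine ⟨⟨0, Set.left_mem_Icc.mpr zero_le_one⟩, ?_⟩
    intro i2 j2
    show ⟪B i2 (0 : ℝ), B j2 (0 : ℝ)⟫ = ⟪A i2, A j2⟫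
    rw [hB0 i2, hB0 j2]
  have huniv := IsClopen.eq_univ ⟨hclosed, hopen⟩ hne
  intro i j t ht
  have hx : (⟨t, ht⟩ : Set.Icc (0 : ℝ) 1) ∈ {x : Set.Icc (0 : ℝ) 1 | ∀ i2 j2 : Fin (n + 2),
      ⟪B i2 (x : ℝ), B j2 (x : ℝ)⟫ = ⟪A i2, A j2⟫} := by
    rw [huniv]; trivial
  have hinner : ⟪B i t, B j t⟫ = ⟪A i, A j⟫ := hx i j
  have h1 : ‖B i t - B j t‖ ^ 2 = 2 - 2 * ⟪B i t, B j t⟫ := by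
    rw [norm_sub_sq_real, hBsph i t ht, hBsph j t ht]; ring
  have h2 : ‖A i - A j‖ ^ 2 = 2 - 2 * ⟪A i, A j⟫ := by
    rw [norm_sub_sq_real, hA i, hA j]; ring
  nlinarith [norm_nonneg (B i t - B j t), norm_nonneg (A i - A j)]
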